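/- Let n ≥ 1 and l ≥ 0, let U = U_l · U_{l-1} ⋯ U_1 where each U_j is a brick-wall layer on n qubits, and let A be a matrix indexed by (Fin n → Fin 2) supported on the interval {i : Fin n | a ≤ (i : ℤ) ∧ (i : ℤ) ≤ b} for integers a ≤ b. Then U* A U is supported on the interval {i : Fin n | a − l ≤ (i : ℤ) ∧ (i : ℤ) ≤ b + l}. In particular, the conjugation of an operator supported on an interval of length m by l brick-wall layers is supported on an interval of length at most m + 2l. -/

import Mathlib

open Matrix

/-- A matrix `A` indexed by `Fin n → Fin 2` is *supported on* `S ⊆ Fin n` if, under the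
canonical index equivalence `(Fin n → Fin 2) ≃ (S → Fin 2) × (Sᶜ → Fin 2)`, it is the
Kronecker product `B ⊗ 1` of some matrix `B` indexed by `S → Fin 2` with the identity
on the remaining sites. -/
def supportedOn {n : ℕ} (S : Finset (Fin n))
    (A : Matrix (Fin n → Fin 2) (Fin n → Fin 2) ℂ) : Prop :=
  ∃ B : Matrix ({i : Fin n // i ∈ S} → Fin 2) ({i : Fin n // i ∈ S} → Fin 2) ℂ,
    A = Matrix.of fun x y =>
      Matrix.kroneckerMap (· * ·) B
        (1 : Matrix ({i : Fin n // ¬ i ∈ S} → Fin 2) ({i : Fin n // ¬ i ∈ S} → Fin 2) ℂ)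
        ((Equiv.piEquivPiSubtypeProd (· ∈ S) fun _ => Fin 2) x)
        ((Equiv.piEquivPiSubtypeProd (· ∈ S) fun _ => Fin 2) y)

/-- A *brick-wall layer* on `n` qubits: a product of finitely many unitary matrices, each
supported on a pair `{i, i+1}` of adjacent sites, with the pairs pairwise disjoint. -/
def IsBrickWallLayer {n : ℕ} (U : Matrix (Fin n → Fin 2) (Fin n → Fin 2) ℂ) : Prop :=
  ∃ gates : List (Matrix (Fin n → Fin 2) (Fin n → Fin 2) ℂ × Finset (Fin n)),
    U = (gates.map Prod.fst).prod ∧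
    (∀ p ∈ gates, p.1 ∈ Matrix.unitaryGroup (Fin n → Fin 2) ℂ) ∧
    (∀ p ∈ gates, ∃ (m : ℕ) (h : m + 1 < n),
      p.2 = ({⟨m, Nat.lt_of_succ_lt h⟩, ⟨m + 1, h⟩} : Finset (Fin n)) ∧
      supportedOn p.2 p.1) ∧
    (gates.map Prod.snd).Pairwise Disjoint

namespace LightConeAux

variable {n : ℕ} {S T : Finset (Fin n)} {A C : Matrix (Fin n → Fin 2) (Fin n → Fin 2) ℂ}

theorem supportedOn_iff :
    supportedOn S A ↔ ∃ B : Matrix ({i : Fin n // i ∈ S} → Fin 2) ({i : Fin n // i ∈ S} → Fin 2) ℂ,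
      A = (Matrix.kroneckerMap (· * ·) B
        (1 : Matrix ({i : Fin n // ¬ i ∈ S} → Fin 2) ({i : Fin n // ¬ i ∈ S} → Fin 2) ℂ)).submatrix
        (Equiv.piEquivPiSubtypeProd (· ∈ S) fun _ => Fin 2)
        (Equiv.piEquivPiSubtypeProd (· ∈ S) fun _ => Fin 2) := Iff.rfl

theorem _root_.supportedOn.mul (hA : supportedOn S A) (hC : supportedOn S C) :
    supportedOn S (A * C) := by
  rw [supportedOn_iff] at *
  obtain ⟨B1, rfl⟩ := hA
  obtain ⟨B2, rfl⟩ := hC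
  refine ⟨B1 * B2, ?_⟩
  rw [submatrix_mul_equiv]
  rw [show Matrix.kroneckerMap (· * ·) B1
        (1 : Matrix ({i : Fin n // ¬ i ∈ S} → Fin 2) ({i : Fin n // ¬ i ∈ S} → Fin 2) ℂ) *
      Matrix.kroneckerMap (· * ·) B2
        (1 : Matrix ({i : Fin n // ¬ i ∈ S} → Fin 2) ({i : Fin n // ¬ i ∈ S} → Fin 2) ℂ) =
      Matrix.kroneckerMap (· * ·) (B1 * B2)
        (1 : Matrix ({i : Fin n // ¬ i ∈ S} → Fin 2) ({i : Fin n // ¬ i ∈ S} → Fin 2) ℂ)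
    from by rw [← mul_kronecker_mul, Matrix.mul_one]]

theorem kron_one_conjTranspose {α β : Type*} [Fintype α] [Fintype β] [DecidableEq α]
    [DecidableEq β] (B : Matrix (α → Fin 2) (α → Fin 2) ℂ) :
    (Matrix.kroneckerMap (· * ·) B (1 : Matrix (β → Fin 2) (β → Fin 2) ℂ))ᴴ
      = Matrix.kroneckerMap (· * ·) Bᴴ (1 : Matrix (β → Fin 2) (β → Fin 2) ℂ) := by
  ext u v
  rcases u with ⟨u1, u2⟩
  rcases v with ⟨v1, v2⟩
  simp only [conjTranspose_apply, kroneckerMap_apply, Matrix.one_apply]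
  by_cases h : u2 = v2
  · simp [h]
  · rw [if_neg (fun e => h e.symm), if_neg h, mul_zero, star_zero, mul_zero]

theorem _root_.supportedOn.star (hA : supportedOn S A) : supportedOn S (Star.star A) := by
  rw [supportedOn_iff] at *
  obtain ⟨B, rfl⟩ := hA
  refine ⟨Bᴴ, ?_⟩
  rw [star_eq_conjTranspose, conjTranspose_submatrix, kron_one_conjTranspose]

theorem supportedOn_apply (hA : supportedOn S A) :
    ∃ B : Matrix ({i : Fin n // i ∈ S} → Fin 2) ({i : Fin n // i ∈ S} → Fin 2) ℂ,
      ∀ x y : Fin n → Fin 2, A x y =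
        B (fun i => x i.1) (fun i => y i.1) *
          (if (fun i : {i : Fin n // ¬ i ∈ S} => x i.1) = (fun i => y i.1) then 1 else 0) := by
  obtain ⟨B, rfl⟩ := hA
  refine ⟨B, fun x y => ?_⟩
  have h0 : (Matrix.of fun x y =>
      Matrix.kroneckerMap (· * ·) B
        (1 : Matrix ({i : Fin n // ¬ i ∈ S} → Fin 2) ({i : Fin n // ¬ i ∈ S} → Fin 2) ℂ)
        ((Equiv.piEquivPiSubtypeProd (· ∈ S) fun _ => Fin 2) x)
        ((Equiv.piEquivPiSubtypeProd (· ∈ S) fun _ => Fin 2) y)) x y =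
      B (fun i => x i.1) (fun i => y i.1) *
        (1 : Matrix ({i : Fin n // ¬ i ∈ S} → Fin 2) ({i : Fin n // ¬ i ∈ S} → Fin 2) ℂ)
          (fun i => x i.1) (fun i => y i.1) := rfl
  rw [h0, Matrix.one_apply]

theorem supportedOn_of_apply
    (B : Matrix ({i : Fin n // i ∈ S} → Fin 2) ({i : Fin n // i ∈ S} → Fin 2) ℂ)
    (h : ∀ x y : Fin n → Fin 2, A x y =
      B (fun i => x i.1) (fun i => y i.1) *
        (if (fun i : {i : Fin n // ¬ i ∈ S} => x i.1) = (fun i => y i.1) then 1 else 0)) :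
    supportedOn S A := by
  refine ⟨B, ?_⟩
  ext x y
  have h0 : (Matrix.of fun x y =>
      Matrix.kroneckerMap (· * ·) B
        (1 : Matrix ({i : Fin n // ¬ i ∈ S} → Fin 2) ({i : Fin n // ¬ i ∈ S} → Fin 2) ℂ)
        ((Equiv.piEquivPiSubtypeProd (· ∈ S) fun _ => Fin 2) x)
        ((Equiv.piEquivPiSubtypeProd (· ∈ S) fun _ => Fin 2) y)) x y =
      B (fun i => x i.1) (fun i => y i.1) *
        (1 : Matrix ({i : Fin n // ¬ i ∈ S} → Fin 2) ({i : Fin n // ¬ i ∈ S} → Fin 2) ℂ)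
          (fun i => x i.1) (fun i => y i.1) := rfl
  rw [h0, Matrix.one_apply, h x y]

theorem _root_.supportedOn.mono (hST : S ⊆ T) (hA : supportedOn S A) : supportedOn T A := by
  obtain ⟨B, hB⟩ := supportedOn_apply hA
  refine supportedOn_of_apply (S := T) (Matrix.of fun u v : {i : Fin n // i ∈ T} → Fin 2 =>
    B (fun i => u ⟨i.1, hST i.2⟩) (fun i => v ⟨i.1, hST i.2⟩) *
      (if ∀ i : {i : Fin n // i ∈ T}, i.1 ∉ S → u i = v i then 1 else 0)) (fun x y => ?_)
  rw [hB x y, Matrix.of_apply]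
  have hiff : ((fun i : {i : Fin n // ¬ i ∈ S} => x i.1) = fun i => y i.1) ↔
      ((∀ i : {i : Fin n // i ∈ T}, i.1 ∉ S → x i.1 = y i.1) ∧
        ((fun i : {i : Fin n // ¬ i ∈ T} => x i.1) = fun i => y i.1)) := by
    simp only [funext_iff, Subtype.forall]
    constructor
    · intro h
      exact ⟨fun i _ hi => h i hi, fun i hi => h i fun hs => hi (hST hs)⟩
    · rintro ⟨h1, h2⟩ i hi
      by_cases ht : i ∈ T
      · exact h1 i ht hi
      · exact h2 i ht
  by_cases h1 : ∀ i : {i : Fin n // i ∈ T}, i.1 ∉ S → x i.1 = y i.1 <;>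
    by_cases h2 : (fun i : {i : Fin n // ¬ i ∈ T} => x i.1) = fun i => y i.1 <;>
    simp [h1, h2, hiff]

theorem _root_.supportedOn.commute_of_disjoint (hA : supportedOn S A) (hC : supportedOn T C)
    (hd : Disjoint S T) : A * C = C * A := by
  obtain ⟨B, hB⟩ := supportedOn_apply hA
  obtain ⟨D, hD⟩ := supportedOn_apply hC
  have hST : ∀ i : Fin n, i ∈ S → i ∉ T := fun i hi => Finset.disjoint_left.mp hd hi
  ext x y
  rw [Matrix.mul_apply, Matrix.mul_apply]
  set z₀ : Fin n → Fin 2 := fun i => if i ∈ S then y i else x i with hz₀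
  set w₀ : Fin n → Fin 2 := fun i => if i ∈ T then y i else x i with hw₀
  rw [Finset.sum_eq_single_of_mem z₀ (Finset.mem_univ z₀) ?_,
      Finset.sum_eq_single_of_mem w₀ (Finset.mem_univ w₀) ?_]
  · -- main equality
    rw [hB x z₀, hD z₀ y, hD x w₀, hB w₀ y]
    have e1 : (fun i : {i : Fin n // ¬ i ∈ S} => x i.1) = fun i => z₀ i.1 := by
      funext i; simp [hz₀, i.2]
    have e2 : (fun i : {i : Fin n // i ∈ S} => z₀ i.1) = fun i => y i.1 := by
      funext i; simp [hz₀, i.2]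
    have e3 : (fun i : {i : Fin n // i ∈ T} => z₀ i.1) = fun i => x i.1 := by
      funext i
      have hiS : i.1 ∉ S := fun h => hST i.1 h i.2
      simp [hz₀, hiS]
    have e4 : (fun i : {i : Fin n // ¬ i ∈ T} => x i.1) = fun i => w₀ i.1 := by
      funext i; simp [hw₀, i.2]
    have e5 : (fun i : {i : Fin n // i ∈ T} => w₀ i.1) = fun i => y i.1 := by
      funext i; simp [hw₀, i.2]
    have e6 : (fun i : {i : Fin n // i ∈ S} => w₀ i.1) = fun i => x i.1 := by
      funext i
      have hiT : i.1 ∉ T := hST i.1 i.2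
      simp [hw₀, hiT]
    have hcond : ((fun i : {i : Fin n // ¬ i ∈ T} => z₀ i.1) = fun i => y i.1) ↔
        ((fun i : {i : Fin n // ¬ i ∈ S} => w₀ i.1) = fun i => y i.1) := by
      simp only [funext_iff, Subtype.forall, hz₀, hw₀]
      constructor
      · intro h i hiS
        by_cases hiT : i ∈ T
        · simp [hiT]
        · have := h i hiT
          simp [hiS] at this
          simp [hiT, this]
      · intro h i hiT
        by_cases hiS : i ∈ S
        · simp [hiS]
        · have := h i hiS
          simp [hiT] at this
          simp [hiS, this]
    rw [e2, e3, e5, e6, ← e1, ← e4]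
    simp only [if_pos rfl]
    by_cases hc : (fun i : {i : Fin n // ¬ i ∈ T} => z₀ i.1) = fun i => y i.1
    · rw [if_pos hc, if_pos (hcond.mp hc)]; ring
    · rw [if_neg hc, if_neg (fun h => hc (hcond.mpr h))]; ring
  · -- w₀ side uniqueness
    intro w _ hw
    by_cases h1 : (fun i : {i : Fin n // ¬ i ∈ T} => x i.1) = fun i => w i.1
    · by_cases h2 : (fun i : {i : Fin n // ¬ i ∈ S} => w i.1) = fun i => y i.1
      · exfalso
        apply hw
        funext i
        by_cases hi : i ∈ T
        · have := congrFun h2 ⟨i, fun hs => hST i hs hi⟩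
          simp [hw₀, hi]
          exact this
        · have := congrFun h1 ⟨i, hi⟩
          simp [hw₀, hi]
          exact this.symm
      · rw [hB w y, if_neg h2, mul_zero, mul_zero]
    · rw [hD x w, if_neg h1, mul_zero, zero_mul]
  · -- z₀ side uniqueness
    intro z _ hz
    by_cases h1 : (fun i : {i : Fin n // ¬ i ∈ S} => x i.1) = fun i => z i.1
    · by_cases h2 : (fun i : {i : Fin n // ¬ i ∈ T} => z i.1) = fun i => y i.1
      · exfalso
        apply hz
        funext i
        by_cases hi : i ∈ S
        · have := congrFun h2 ⟨i, hST i hi⟩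
          simp [hz₀, hi]
          exact this
        · have := congrFun h1 ⟨i, hi⟩
          simp [hz₀, hi]
          exact this.symm
      · rw [hD z y, if_neg h2, mul_zero, mul_zero]
    · rw [hB x z, if_neg h1, mul_zero, zero_mul]

end LightConeAux
namespace LightConeAux

variable {n : ℕ}

theorem conj_gates (gs : List (Matrix (Fin n → Fin 2) (Fin n → Fin 2) ℂ × Finset (Fin n)))
    (hu : ∀ p ∈ gs, p.1 ∈ Matrix.unitaryGroup (Fin n → Fin 2) ℂ)
    (hs : ∀ p ∈ gs, supportedOn p.2 p.1)
    (C : Finset (Fin n)) (hC : ∀ p ∈ gs, p.2 ⊆ C ∨ Disjoint p.2 C)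
    (A : Matrix (Fin n → Fin 2) (Fin n → Fin 2) ℂ) (hA : supportedOn C A) :
    supportedOn C (star (gs.map Prod.fst).prod * A * (gs.map Prod.fst).prod) := by
  induction gs generalizing A with
  | nil => simpa using hA
  | cons g rest ih =>
    have hmem : g ∈ g :: rest := List.mem_cons_self
    have hgC : supportedOn C (star g.1 * A * g.1) := by
      rcases hC g hmem with hsub | hdis
      · have hg : supportedOn C g.1 := (hs g hmem).mono hsub
        exact (hg.star.mul hA).mul hg
      · have hcomm : A * g.1 = g.1 * A :=
          hA.commute_of_disjoint (hs g hmem) hdis.symm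
        have huni : star g.1 * g.1 = 1 :=
          (Matrix.mem_unitaryGroup_iff'.mp (hu g hmem))
        rw [mul_assoc, hcomm, ← mul_assoc, huni, one_mul]
        exact hA
    have hrest := ih (fun p hp => hu p (List.mem_cons_of_mem g hp))
      (fun p hp => hs p (List.mem_cons_of_mem g hp))
      (fun p hp => hC p (List.mem_cons_of_mem g hp))
      (star g.1 * A * g.1) hgC
    simp only [List.map_cons, List.prod_cons, StarMul.star_mul, mul_assoc] at hrest ⊢
    exact hrest

def foldSet (S : Finset (Fin n))
    (gs : List (Matrix (Fin n → Fin 2) (Fin n → Fin 2) ℂ × Finset (Fin n))) : Finset (Fin n) :=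
  gs.foldr (fun p acc => if Disjoint p.2 S then acc else p.2 ∪ acc) ∅

theorem subset_foldSet {S : Finset (Fin n)} {gs} {p} (hp : p ∈ gs) (h : ¬ Disjoint p.2 S) :
    p.2 ⊆ foldSet S gs := by
  induction gs with
  | nil => cases hp
  | cons q rest ih =>
    rcases List.mem_cons.mp hp with rfl | hp'
    · simp only [foldSet, List.foldr_cons, if_neg h]
      exact Finset.subset_union_left
    · have := ih hp'
      simp only [foldSet, List.foldr_cons]
      split
      · exact this
      · exact this.trans Finset.subset_union_right

theorem disjoint_foldSet {S P : Finset (Fin n)} {gs}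
    (h : ∀ q ∈ gs, ¬ Disjoint q.2 S → Disjoint P q.2) :
    Disjoint P (foldSet S gs) := by
  induction gs with
  | nil => simp [foldSet]
  | cons q rest ih =>
    have ih' := ih fun r hr => h r (List.mem_cons_of_mem q hr)
    simp only [foldSet, List.foldr_cons]
    split
    · exact ih'
    · exact Finset.disjoint_union_right.mpr ⟨h q (List.mem_cons_self) (by assumption), ih'⟩

theorem mem_foldSet {S : Finset (Fin n)} {gs} {i : Fin n} (hi : i ∈ foldSet S gs) :
    ∃ p ∈ gs, ¬ Disjoint p.2 S ∧ i ∈ p.2 := by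
  induction gs with
  | nil => simp [foldSet] at hi
  | cons q rest ih =>
    simp only [foldSet, List.foldr_cons] at hi
    split at hi
    · obtain ⟨p, hp, h1, h2⟩ := ih hi
      exact ⟨p, List.mem_cons_of_mem q hp, h1, h2⟩
    · rcases Finset.mem_union.mp hi with h | h
      · exact ⟨q, List.mem_cons_self, by assumption, h⟩
      · obtain ⟨p, hp, h1, h2⟩ := ih h
        exact ⟨p, List.mem_cons_of_mem q hp, h1, h2⟩

theorem layer_conj {U : Matrix (Fin n → Fin 2) (Fin n → Fin 2) ℂ} (hU : IsBrickWallLayer U)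
    (a b : ℤ) (A : Matrix (Fin n → Fin 2) (Fin n → Fin 2) ℂ)
    (hA : supportedOn (Finset.univ.filter fun i : Fin n => a ≤ (i : ℤ) ∧ (i : ℤ) ≤ b) A) :
    supportedOn (Finset.univ.filter fun i : Fin n => a - 1 ≤ (i : ℤ) ∧ (i : ℤ) ≤ b + 1)
      (star U * A * U) := by
  obtain ⟨gates, rfl, hu, hsup, hpair⟩ := hU
  set S := Finset.univ.filter fun i : Fin n => a ≤ (i : ℤ) ∧ (i : ℤ) ≤ b with hS
  set T := S ∪ foldSet S gates with hT
  have hsup' : ∀ p ∈ gates, supportedOn p.2 p.1 := fun p hp => (hsup p hp).choose_spec.choose_spec.2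
  -- each gate's support set is contained in T or disjoint from T
  have hCT : ∀ p ∈ gates, p.2 ⊆ T ∨ Disjoint p.2 T := by
    intro p hp
    by_cases hd : Disjoint p.2 S
    · right
      rw [hT, Finset.disjoint_union_right]
      refine ⟨hd, disjoint_foldSet fun q hq hqS => ?_⟩
      have hne : p.2 ≠ q.2 := fun h => hqS (h ▸ hd)
      have hmem1 : p.2 ∈ gates.map Prod.snd := List.mem_map_of_mem hp
      have hmem2 : q.2 ∈ gates.map Prod.snd := List.mem_map_of_mem hq
      exact hpair.forall hmem1 hmem2 hne
    · left
      exact (subset_foldSet hp hd).trans (hT ▸ Finset.subset_union_right)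
  have hTsub : T ⊆ Finset.univ.filter fun i : Fin n => a - 1 ≤ (i : ℤ) ∧ (i : ℤ) ≤ b + 1 := by
    intro i hi
    rcases Finset.mem_union.mp hi with h | h
    · rw [hS, Finset.mem_filter] at h
      rw [Finset.mem_filter]
      exact ⟨Finset.mem_univ i, by omega⟩
    · obtain ⟨p, hp, hnd, hip⟩ := mem_foldSet h
      obtain ⟨m, hm, hpeq, -⟩ := hsup p hp
      obtain ⟨j, hj1, hj2⟩ := Finset.not_disjoint_iff.mp hnd
      rw [hS, Finset.mem_filter] at hj2
      rw [hpeq] at hj1 hip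
      rw [Finset.mem_filter]
      refine ⟨Finset.mem_univ i, ?_⟩
      have hj : (j : ℤ) = m ∨ (j : ℤ) = m + 1 := by
        rcases Finset.mem_insert.mp hj1 with h' | h'
        · left; rw [h']
        · right; rw [Finset.mem_singleton.mp h']; simp
      have hi' : (i : ℤ) = m ∨ (i : ℤ) = m + 1 := by
        rcases Finset.mem_insert.mp hip with h' | h'
        · left; rw [h']
        · right; rw [Finset.mem_singleton.mp h']; simp
      omega
  have hST : S ⊆ T := hT ▸ Finset.subset_union_left
  exact (conj_gates gates hu hsup' T hCT A (hA.mono hST)).mono hTsub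

end LightConeAux

/-- Light-cone growth of supports: conjugating an operator supported on an
interval `[a, b]` by a product `U = U_l ⋯ U_1` of `l` brick-wall layers yields an
operator supported on the interval `[a - l, b + l]`. -/
theorem brickwall_conjugation_light_cone (n : ℕ) (hn : 1 ≤ n) (l : ℕ)
    (Us : List (Matrix (Fin n → Fin 2) (Fin n → Fin 2) ℂ))
    (hlen : Us.length = l) (hlayers : ∀ V ∈ Us, IsBrickWallLayer V)
    (a b : ℤ) (hab : a ≤ b)
    (A : Matrix (Fin n → Fin 2) (Fin n → Fin 2) ℂ)
    (hA : supportedOn (Finset.univ.filter fun i : Fin n => a ≤ (i : ℤ) ∧ (i : ℤ) ≤ b) A) :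
    supportedOn
      (Finset.univ.filter fun i : Fin n => a - l ≤ (i : ℤ) ∧ (i : ℤ) ≤ b + l)
      (star Us.prod * A * Us.prod) := by
  subst hlen
  induction Us generalizing a b A with
  | nil =>
    simpa using hA
  | cons V rest ih =>
    have h1 := LightConeAux.layer_conj (hlayers V (List.mem_cons_self)) a b A hA
    have h2 := ih (fun W hW => hlayers W (List.mem_cons_of_mem V hW)) (a - 1) (b + 1)
      (by omega) _ h1
    have hset : (Finset.univ.filter fun i : Fin n =>
          a - ((V :: rest).length : ℤ) ≤ (i : ℤ) ∧ (i : ℤ) ≤ b + ((V :: rest).length : ℤ)) =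
        Finset.univ.filter fun i : Fin n =>
          a - 1 - (rest.length : ℤ) ≤ (i : ℤ) ∧ (i : ℤ) ≤ b + 1 + (rest.length : ℤ) := by
      ext i
      simp only [Finset.mem_filter, Finset.mem_univ, true_and, List.length_cons]
      push_cast
      omega
    rw [hset]
    simp only [List.prod_cons, StarMul.star_mul, mul_assoc] at h2 ⊢
    exact h2
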